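/- Fix scores s_1,…,s_n ∈ (0,1], a quantile level q ∈ (0,1), a privacy parameter ε > 0, and m bins, and let ŝ be the output of the private quantile mechanism. Then for every δ ∈ (0,1), P( (1/n)·#{i : [s_i] ≤ ŝ} ≥ q − 2·max{(1−q)/q, 1}·log(m/δ)/(nε) ) ≥ 1 − δ, where the probability is over the randomness of the mechanism. -/

import Mathlib

open MeasureTheory ProbabilityTheory

/-- The weight assigned to bin edge `e j` by the private quantile mechanism run at
quantile level `q` on the (discretized) scores `d ∘ v`. -/
noncomputable def quantWeight {n : ℕ} (e : ℕ → ℝ) (d : ℝ → ℝ) (q : ℝ)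
    (v : Fin n → ℝ) (j : ℕ) : ℝ :=
  max ((Set.ncard {i : Fin n | d (v i) < e j} : ℝ) / q)
      ((Set.ncard {i : Fin n | e j < d (v i)} : ℝ) / (1 - q))

/-- The probability that the private quantile mechanism (exponential mechanism with
privacy level `ε`) outputs the bin edge `e j`. -/
noncomputable def mechProb (m : ℕ) {n : ℕ} (e : ℕ → ℝ) (d : ℝ → ℝ) (q ε : ℝ)
    (v : Fin n → ℝ) (j : ℕ) : ℝ :=
  Real.exp (-(ε / 2) * quantWeight e d q v j) /
    ∑ j' ∈ Finset.Icc 1 m, Real.exp (-(ε / 2) * quantWeight e d q v j')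

set_option maxHeartbeats 1000000 in
/-- **Accuracy of the private quantile mechanism (lower tail).**  With probability at
least `1 - δ` over the mechanism's randomness, at least a
`q - 2·max{(1-q)/q, 1}·log(m/δ)/(nε)` fraction of the discretized scores lie at or
below the output `ŝ`. -/
theorem private_quantile_accuracy_lower
    {Ω : Type*} [MeasurableSpace Ω] (P : Measure Ω) [IsProbabilityMeasure P]
    (n m : ℕ) (hn : 1 ≤ n) (hm : 1 ≤ m)
    (e : ℕ → ℝ) (he0 : e 0 = 0) (hem : e m = 1) (hmono : ∀ j < m, e j < e (j + 1))
    (d : ℝ → ℝ)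
    (hd : ∀ s : ℝ, ∀ j : ℕ, 1 ≤ j → j ≤ m → s ∈ Set.Ioc (e (j - 1)) (e j) → d s = e j)
    (s : Fin n → ℝ) (hs : ∀ i, s i ∈ Set.Ioc (0 : ℝ) 1)
    (q ε : ℝ) (hq : q ∈ Set.Ioo (0 : ℝ) 1) (hε : 0 < ε)
    (shat : Ω → ℝ) (hshatmeas : Measurable shat)
    (hdist : ∀ j, 1 ≤ j → j ≤ m →
      P {ω | shat ω = e j} = ENNReal.ofReal (mechProb m e d q ε s j))
    (δ : ℝ) (hδ : δ ∈ Set.Ioo (0 : ℝ) 1) :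
    1 - ENNReal.ofReal δ ≤
      P {ω | q - 2 * max ((1 - q) / q) 1 * Real.log (m / δ) / (n * ε) ≤
        (Set.ncard {i : Fin n | d (s i) ≤ shat ω} : ℝ) / n} := by
  classical
  obtain ⟨hq0, hq1⟩ := hq
  obtain ⟨hδ0, hδ1⟩ := hδ
  have hn0 : (0:ℝ) < n := by exact_mod_cast Nat.lt_of_lt_of_le Nat.zero_lt_one hn
  have hm0 : (0:ℝ) < m := by exact_mod_cast Nat.lt_of_lt_of_le Nat.zero_lt_one hm
  set L := Real.log (↑m / δ) with hLdef
  have hL0 : 0 < L := by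
    apply Real.log_pos
    rw [lt_div_iff₀ hδ0]
    have h1 : (1:ℝ) ≤ m := by exact_mod_cast hm
    nlinarith
  -- monotonicity of e
  have elt : ∀ i j : ℕ, i < j → j ≤ m → e i < e j := by
    intro i j hij hjm
    induction j with
    | zero => omega
    | succ k ih =>
      rcases Nat.lt_succ_iff_lt_or_eq.mp hij with h | h
      · exact lt_trans (ih h (by omega)) (hmono k (by omega))
      · rw [h]; exact hmono k (by omega)
  have ele : ∀ i j : ℕ, i ≤ j → j ≤ m → e i ≤ e j := by
    intro i j hij hjm
    rcases eq_or_lt_of_le hij with h | h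
    · rw [h]
    · exact (elt i j h hjm).le
  -- discretization lands on some bin edge
  have hσex : ∀ i : Fin n, ∃ j, 1 ≤ j ∧ j ≤ m ∧ d (s i) = e j := by
    intro i
    obtain ⟨hsi0, hsi1⟩ := hs i
    have hex : ∃ j, j ≤ m ∧ s i ≤ e j := ⟨m, le_rfl, by rw [hem]; exact hsi1⟩
    obtain ⟨hjm, hsle⟩ := Nat.find_spec hex
    set j := Nat.find hex with hjdef
    have hj1 : 1 ≤ j := by
      by_contra h
      have hj00 : j = 0 := by omega
      rw [hj00, he0] at hsle
      linarith
    have hmin := Nat.find_min hex (m := j - 1) (by omega)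
    push_neg at hmin
    have hlt : e (j - 1) < s i := hmin (by omega)
    exact ⟨j, hj1, hjm, hd (s i) j hj1 hjm ⟨hlt, hsle⟩⟩
  choose σ hσ1 hσ2 hσ3 using hσex
  -- counting functions
  set c : ℕ → ℕ := fun j => (Finset.univ.filter (fun i : Fin n => d (s i) ≤ e j)).card with hcdef
  set b : ℕ → ℕ := fun j => (Finset.univ.filter (fun i : Fin n => e j < d (s i))).card with hbdef
  set a : ℕ → ℕ := fun j => (Finset.univ.filter (fun i : Fin n => d (s i) < e j)).card with hadef
  have hcb : ∀ j, c j + b j = n := by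
    intro j
    have h := Finset.card_filter_add_card_filter_not
      (s := (Finset.univ : Finset (Fin n))) (p := fun i : Fin n => d (s i) ≤ e j)
    simpa [hcdef, hbdef, not_le, Finset.card_univ] using h
  have hncard : ∀ (x : ℝ),
      (Set.ncard {i : Fin n | d (s i) ≤ x} : ℝ) =
        ((Finset.univ.filter (fun i : Fin n => d (s i) ≤ x)).card : ℝ) := by
    intro x
    congr 1
    rw [Set.ncard_eq_toFinset_card']
    congr 1
    ext i
    simp
  have hw : ∀ j, quantWeight e d q s j = max ((a j : ℝ)/q) ((b j : ℝ)/(1-q)) := by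
    intro j
    unfold quantWeight
    congr 2
    · congr 1
      rw [Set.ncard_eq_toFinset_card']
      congr 1
      ext i
      simp [hadef]
    · congr 1
      rw [Set.ncard_eq_toFinset_card']
      congr 1
      ext i
      simp [hbdef]
  -- existence of a low-weight bin
  have hcm : c m = n := by
    simp only [hcdef]
    have hall : ∀ i ∈ (Finset.univ : Finset (Fin n)), d (s i) ≤ e m := by
      intro i _
      rw [hσ3 i]
      exact ele (σ i) m (hσ2 i) le_rfl
    rw [Finset.filter_true_of_mem hall, Finset.card_univ, Fintype.card_fin]
  have hexQ : ∃ j, 1 ≤ j ∧ j ≤ m ∧ q * n ≤ (c j : ℝ) := by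
    refine ⟨m, hm, le_rfl, ?_⟩
    rw [hcm]
    nlinarith
  obtain ⟨hj01, hj0m, hj0c⟩ := Nat.find_spec hexQ
  set j0 := Nat.find hexQ with hj0def
  have hq1' : (0:ℝ) < 1 - q := by linarith
  have hwj0 : quantWeight e d q s j0 ≤ n := by
    rw [hw]
    apply max_le
    · rw [div_le_iff₀ hq0]
      -- a j0 ≤ n * q
      rcases eq_or_lt_of_le hj01 with h1 | h1
      · have ha0 : a j0 = 0 := by
          rw [hadef]
          rw [Finset.card_eq_zero, Finset.filter_eq_empty_iff]
          intro i _
          rw [hσ3 i, ← h1]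
          exact not_lt.mpr (ele 1 (σ i) (hσ1 i) (hσ2 i))
        rw [ha0]
        simp only [Nat.cast_zero]
        positivity
      · have hsub : a j0 ≤ c (j0 - 1) := by
          apply Finset.card_le_card
          intro i hi
          simp only [Finset.mem_filter, Finset.mem_univ, true_and] at hi ⊢
          rw [hσ3 i] at hi ⊢
          have hklt : σ i < j0 := by
            by_contra h
            push_neg at h
            exact absurd hi (not_lt.mpr (ele j0 (σ i) h (hσ2 i)))
          exact ele (σ i) (j0 - 1) (by omega) (by omega)
        have hmin := Nat.find_min hexQ (m := j0 - 1) (by omega)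
        push_neg at hmin
        have hlt : (c (j0 - 1) : ℝ) < q * n := hmin (by omega) (by omega)
        have : (a j0 : ℝ) ≤ (c (j0 - 1) : ℝ) := by exact_mod_cast hsub
        nlinarith
    · rw [div_le_iff₀ hq1']
      have hb : (b j0 : ℝ) = n - c j0 := by
        have := hcb j0
        have : ((c j0 : ℕ) : ℝ) + b j0 = n := by exact_mod_cast this
        linarith
      rw [hb]
      nlinarith
  -- bad bins have large weight
  set M := max ((1 - q) / q) 1 with hMdef
  have hM1 : (1:ℝ) ≤ M := le_max_right _ _
  set T := 2 * L / ε with hTdef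
  have hT0 : 0 < T := by positivity
  have hBT : 2 * M * L / (↑n * ε) = M * T / n := by
    rw [hTdef]; field_simp
  have hbadw : ∀ j, (c j : ℝ)/n < q - 2 * M * L / (↑n * ε) →
      (n : ℝ) + T ≤ quantWeight e d q s j := by
    intro j hj
    rw [hBT] at hj
    rw [hw]
    refine le_trans ?_ (le_max_right _ _)
    have hb : (b j : ℝ) = n - c j := by
      have := hcb j
      have : ((c j : ℕ) : ℝ) + b j = n := by exact_mod_cast this
      linarith
    rw [hb, le_div_iff₀ hq1']
    have hc : (c j : ℝ) < q * n - M * T := by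
      have h2 := (div_lt_iff₀ hn0).mp hj
      have h3 : (q - M * T / ↑n) * ↑n = q * n - M * T := by field_simp
      linarith [h3 ▸ h2]
    nlinarith
  -- probability of each bad bin
  set Z := ∑ j' ∈ Finset.Icc 1 m, Real.exp (-(ε / 2) * quantWeight e d q s j') with hZdef
  have hZpos : 0 < Z := by
    apply Finset.sum_pos (fun j _ => Real.exp_pos _)
    exact ⟨1, Finset.mem_Icc.mpr ⟨le_rfl, hm⟩⟩
  have hZge : Real.exp (-(ε/2) * n) ≤ Z := by
    calc Real.exp (-(ε/2) * n) ≤ Real.exp (-(ε/2) * quantWeight e d q s j0) := by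
          apply Real.exp_le_exp.mpr
          have h := mul_le_mul_of_nonneg_left hwj0 (by positivity : (0:ℝ) ≤ ε/2)
          linarith
      _ ≤ Z := Finset.single_le_sum
          (f := fun j => Real.exp (-(ε / 2) * quantWeight e d q s j))
          (fun j _ => (Real.exp_pos _).le)
          (Finset.mem_Icc.mpr ⟨hj01, hj0m⟩)
  have hpnonneg : ∀ j, 0 ≤ mechProb m e d q ε s j := by
    intro j
    unfold mechProb
    exact div_nonneg (Real.exp_pos _).le hZpos.le
  have hpsum : ∑ j ∈ Finset.Icc 1 m, mechProb m e d q ε s j = 1 := by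
    unfold mechProb
    rw [← Finset.sum_div]
    exact div_self hZpos.ne'
  have hpbad : ∀ j, (n : ℝ) + T ≤ quantWeight e d q s j →
      mechProb m e d q ε s j ≤ δ / m := by
    intro j hwj
    have h1 : Real.exp (-(ε/2) * quantWeight e d q s j) ≤ Real.exp (-(ε/2) * (↑n + T)) := by
      apply Real.exp_le_exp.mpr
      have h := mul_le_mul_of_nonneg_left hwj (by positivity : (0:ℝ) ≤ ε/2)
      linarith
    have h2 : mechProb m e d q ε s j ≤
        Real.exp (-(ε/2) * (↑n + T)) / Real.exp (-(ε/2) * ↑n) := by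
      unfold mechProb
      exact div_le_div₀ (Real.exp_pos _).le h1 (Real.exp_pos _) hZge
    rw [← Real.exp_sub] at h2
    have h3 : -(ε/2) * (↑n + T) - -(ε/2) * ↑n = -L := by
      rw [hTdef]; field_simp; ring
    rw [h3, Real.exp_neg, hLdef, Real.exp_log (by positivity), inv_div] at h2
    exact h2
  -- events
  set A : ℕ → Set Ω := fun j => {ω | shat ω = e j} with hAdef
  have hAmeas : ∀ j, MeasurableSet (A j) := fun j =>
    hshatmeas (measurableSet_singleton (e j))
  have hdisj : (↑(Finset.Icc 1 m) : Set ℕ).PairwiseDisjoint A := by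
    intro j hj k hk hjk
    simp only [Finset.coe_Icc, Set.mem_Icc] at hj hk
    refine Set.disjoint_left.mpr fun ω hωj hωk => hjk ?_
    have hee : e j = e k := by
      have h1 : shat ω = e j := hωj
      have h2 : shat ω = e k := hωk
      rw [← h1, h2]
    rcases lt_trichotomy j k with h | h | h
    · exact absurd hee (ne_of_lt (elt j k h hk.2))
    · exact h
    · exact absurd hee.symm (ne_of_lt (elt k j h hj.2))
  have hPU : P (⋃ j ∈ Finset.Icc 1 m, A j) = 1 := by
    rw [measure_biUnion_finset hdisj (fun j _ => hAmeas j)]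
    have heq : ∀ j ∈ Finset.Icc 1 m, P (A j) = ENNReal.ofReal (mechProb m e d q ε s j) := by
      intro j hj
      rw [Finset.mem_Icc] at hj
      exact hdist j hj.1 hj.2
    rw [Finset.sum_congr rfl heq,
      ← ENNReal.ofReal_sum_of_nonneg (fun j _ => hpnonneg j), hpsum, ENNReal.ofReal_one]
  set Bad := (Finset.Icc 1 m).filter (fun j => (c j : ℝ)/n < q - 2 * M * L / (↑n * ε))
    with hBadDef
  set G := {ω | q - 2 * M * L / (↑n * ε) ≤
      (Set.ncard {i : Fin n | d (s i) ≤ shat ω} : ℝ) / n} with hGdef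
  have hsub : (⋃ j ∈ Finset.Icc 1 m, A j) ⊆ G ∪ ⋃ j ∈ Bad, A j := by
    intro ω hω
    simp only [Set.mem_iUnion, exists_prop] at hω
    obtain ⟨j, hjmem, hωj⟩ := hω
    by_cases hb : (c j : ℝ)/n < q - 2 * M * L / (↑n * ε)
    · right
      simp only [Set.mem_iUnion, exists_prop]
      exact ⟨j, Finset.mem_filter.mpr ⟨hjmem, hb⟩, hωj⟩
    · left
      push_neg at hb
      have hωeq : shat ω = e j := hωj
      show q - 2 * M * L / (↑n * ε) ≤ (Set.ncard {i : Fin n | d (s i) ≤ shat ω} : ℝ) / n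
      rw [hωeq, hncard]
      exact hb
  have hPbad : P (⋃ j ∈ Bad, A j) ≤ ENNReal.ofReal δ := by
    calc P (⋃ j ∈ Bad, A j) ≤ ∑ j ∈ Bad, P (A j) := measure_biUnion_finset_le _ _
      _ ≤ ∑ _j ∈ Bad, ENNReal.ofReal (δ/m) := by
          apply Finset.sum_le_sum
          intro j hj
          rw [Finset.mem_filter] at hj
          obtain ⟨hjmem, hjbad⟩ := hj
          rw [Finset.mem_Icc] at hjmem
          rw [hdist j hjmem.1 hjmem.2]
          exact ENNReal.ofReal_le_ofReal (hpbad j (hbadw j hjbad))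
      _ ≤ ∑ _j ∈ Finset.Icc 1 m, ENNReal.ofReal (δ/m) :=
          Finset.sum_le_sum_of_subset (Finset.filter_subset _ _)
      _ = ENNReal.ofReal δ := by
          rw [Finset.sum_const, Nat.card_Icc, nsmul_eq_mul]
          simp only [Nat.add_sub_cancel]
          rw [← ENNReal.ofReal_natCast m, ← ENNReal.ofReal_mul (by positivity)]
          congr 1
          field_simp
  rw [tsub_le_iff_right]
  calc (1 : ENNReal) = P (⋃ j ∈ Finset.Icc 1 m, A j) := hPU.symm
    _ ≤ P (G ∪ ⋃ j ∈ Bad, A j) := measure_mono hsub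
    _ ≤ P G + P (⋃ j ∈ Bad, A j) := measure_union_le _ _
    _ ≤ P G + ENNReal.ofReal δ := add_le_add le_rfl hPbad
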